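/- If a sequence of probability measures G_k on [b, ∞), b ≥ 1, satisfies ∫ zⁿ dG_k(z) → mⁿ(b) for every n ≥ 0, where mⁿ(b) = bⁿ for n ≤ ⌊b⌋ and mⁿ(b) = nⁿ for n > ⌊b⌋, then a contradiction arises: no limiting distribution with these moments exists (since the first moment b forces degeneracy at b, implying all moments equal bⁿ, contradicting mⁿ(b) = nⁿ for large n). -/
import Mathlib


open MeasureTheory Filter Topology

private lemma aux_pow_sub_pow_le (n : ℕ) : ∀ x y : ℝ, 0 ≤ y → y ≤ x →
    x ^ (n + 1) - y ^ (n + 1) ≤ ((n : ℝ) + 1) * x ^ n * (x - y) := by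
  induction n with
  | zero => intro x y _ _; simp
  | succ m ih =>
    intro x y hy hxy
    have hx : 0 ≤ x := le_trans hy hxy
    have h2 := ih x y hy hxy
    have h3 : y ^ (m + 1) ≤ x ^ (m + 1) := pow_le_pow_left₀ hy hxy (m + 1)
    calc x ^ (m + 1 + 1) - y ^ (m + 1 + 1)
        = x * (x ^ (m + 1) - y ^ (m + 1)) + (x - y) * y ^ (m + 1) := by ring
      _ ≤ x * (((m : ℝ) + 1) * x ^ m * (x - y)) + (x - y) * x ^ (m + 1) :=
          add_le_add (mul_le_mul_of_nonneg_left h2 hx)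
            (mul_le_mul_of_nonneg_left h3 (sub_nonneg.2 hxy))
      _ = ((m + 1 : ℕ) + 1 : ℝ) * x ^ (m + 1) * (x - y) := by push_cast; ring

theorem stmt_10 (b : ℝ) (hb : 1 ≤ b) :
    ¬ ∃ G : ℕ → Measure ℝ, (∀ k, IsProbabilityMeasure (G k)) ∧
      (∀ k, (G k) (Set.Ici b)ᶜ = 0) ∧
      (∀ n : ℕ, Tendsto (fun k => ∫ z, z ^ n ∂(G k)) atTop
        (nhds (if n ≤ Nat.floor b then b ^ n else (n : ℝ) ^ n))) := by
  rintro ⟨G, hprob, hsupp, hmom⟩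
  haveI := hprob
  set N := Nat.floor b with hN
  have hN1 : 1 ≤ N := by rw [hN]; exact (Nat.one_le_floor_iff b).mpr hb
  have hb0 : (0:ℝ) < b := lt_of_lt_of_le one_pos hb
  have hbN : b < (N : ℝ) + 1 := Nat.lt_floor_add_one b
  -- limits of the relevant moments
  have h1 : Tendsto (fun k => ∫ z, z ∂(G k)) atTop (𝓝 b) := by
    have := hmom 1
    rw [if_pos hN1] at this
    simpa using this
  have hnn : Tendsto (fun k => ∫ z, z ^ (N + 1) ∂(G k)) atTop
      (𝓝 (((N:ℝ) + 1) ^ (N + 1))) := by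
    have := hmom (N + 1)
    rw [if_neg (by omega)] at this
    push_cast at this
    exact this
  have h2n : Tendsto (fun k => ∫ z, z ^ (2 * N + 1) ∂(G k)) atTop
      (𝓝 ((2 * (N:ℝ) + 1) ^ (2 * N + 1))) := by
    have := hmom (2 * N + 1)
    rw [if_neg (by omega)] at this
    push_cast at this
    exact this
  -- eventual integrability
  have evInt : ∀ (m : ℕ) (c : ℝ), 0 < c →
      Tendsto (fun k => ∫ z, z ^ m ∂(G k)) atTop (𝓝 c) →
      ∀ᶠ k in atTop, Integrable (fun z => z ^ m) (G k) := by
    intro m c hc ht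
    filter_upwards [ht.eventually (eventually_gt_nhds hc)] with k hk
    by_contra h
    rw [integral_undef h] at hk
    exact lt_irrefl _ hk
  have int1 : ∀ᶠ k in atTop, Integrable (fun z => z) (G k) := by
    have := evInt 1 b hb0 (by simpa using h1)
    simpa using this
  have intn : ∀ᶠ k in atTop, Integrable (fun z => z ^ (N + 1)) (G k) :=
    evInt (N + 1) _ (by positivity) hnn
  have int2n : ∀ᶠ k in atTop, Integrable (fun z => z ^ (2 * N + 1)) (G k) :=
    evInt (2 * N + 1) _ (by positivity) h2n
  -- a.e. support
  have hae : ∀ k, ∀ᵐ z ∂(G k), b ≤ z := by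
    intro k
    rw [ae_iff, show {z : ℝ | ¬ b ≤ z} = (Set.Ici b)ᶜ by ext z; simp [not_le]]
    exact hsupp k
  -- key: for every δ > 0 the limit inequality
  have key : ∀ δ : ℝ, 0 < δ →
      ((N:ℝ) + 1) ^ (N + 1) ≤ b ^ (N + 1)
        + δ * (((N:ℝ) + 1) ^ 2 * (2 * (N:ℝ) + 1) ^ (2 * N + 1)) := by
    intro δ hδ
    have hineq : ∀ᶠ k in atTop,
        ∫ z, z ^ (N + 1) ∂(G k) ≤
          b ^ (N + 1) + (1 / (4 * δ)) * ((∫ z, z ∂(G k)) - b)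
            + δ * ((N:ℝ) + 1) ^ 2 * ∫ z, z ^ (2 * N + 1) ∂(G k) := by
      filter_upwards [int1, intn, int2n] with k hk1 hkn hk2n
      have hrhs : Integrable (fun z => b ^ (N + 1) + (1 / (4 * δ)) * (z - b)
          + δ * ((N:ℝ) + 1) ^ 2 * z ^ (2 * N + 1)) (G k) := by
        apply Integrable.add
        · exact (integrable_const _).add (((hk1.sub (integrable_const b)).const_mul _))
        · exact hk2n.const_mul _
      have hmono : ∫ z, z ^ (N + 1) ∂(G k) ≤
          ∫ z, (b ^ (N + 1) + (1 / (4 * δ)) * (z - b)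
            + δ * ((N:ℝ) + 1) ^ 2 * z ^ (2 * N + 1)) ∂(G k) := by
        apply integral_mono_ae hkn hrhs
        filter_upwards [hae k] with z hz
        have hz0 : (0:ℝ) ≤ z := le_trans (le_of_lt hb0) hz
        have hzb : 0 ≤ z - b := sub_nonneg.2 hz
        -- step A
        have stepA : z ^ (N + 1) - b ^ (N + 1) ≤ ((N:ℝ) + 1) * z ^ N * (z - b) :=
          aux_pow_sub_pow_le N z b (le_of_lt hb0) hz
        -- AM-GM : a ≤ 1/(4δ) + δ a²
        have amgm : ∀ a : ℝ, a ≤ 1 / (4 * δ) + δ * a ^ 2 := by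
          intro a
          have h4 : (0:ℝ) < 4 * δ := by linarith
          have hsq : 0 ≤ (2 * δ * a - 1) ^ 2 := sq_nonneg _
          rw [div_add' _ _ _ (ne_of_gt h4), le_div_iff₀ h4]
          nlinarith
        have stepB : ((N:ℝ) + 1) * z ^ N ≤ 1 / (4 * δ) + δ * (((N:ℝ) + 1) * z ^ N) ^ 2 :=
          amgm _
        have hzNsq : (((N:ℝ) + 1) * z ^ N) ^ 2 = ((N:ℝ) + 1) ^ 2 * z ^ (2 * N) := by
          rw [mul_pow, ← pow_mul]
          ring_nf
        have hz2N : (0:ℝ) ≤ z ^ (2 * N) := pow_nonneg hz0 _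
        have stepC : z ^ (2 * N) * (z - b) ≤ z ^ (2 * N + 1) := by
          calc z ^ (2 * N) * (z - b) ≤ z ^ (2 * N) * z :=
                mul_le_mul_of_nonneg_left (by linarith) hz2N
            _ = z ^ (2 * N + 1) := (pow_succ z (2 * N)).symm
        -- combine
        have hcomb : ((N:ℝ) + 1) * z ^ N * (z - b) ≤
            (1 / (4 * δ)) * (z - b) + δ * ((N:ℝ) + 1) ^ 2 * z ^ (2 * N + 1) := by
          have h5 : ((N:ℝ) + 1) * z ^ N * (z - b) ≤
              (1 / (4 * δ) + δ * (((N:ℝ) + 1) * z ^ N) ^ 2) * (z - b) :=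
            mul_le_mul_of_nonneg_right stepB hzb
          rw [hzNsq] at h5
          have h6 : δ * (((N:ℝ) + 1) ^ 2 * z ^ (2 * N)) * (z - b) ≤
              δ * ((N:ℝ) + 1) ^ 2 * z ^ (2 * N + 1) := by
            have := mul_le_mul_of_nonneg_left stepC (by positivity :
              (0:ℝ) ≤ δ * ((N:ℝ) + 1) ^ 2)
            nlinarith
          nlinarith
        linarith [stepA, hcomb]
      calc ∫ z, z ^ (N + 1) ∂(G k) ≤ _ := hmono
        _ = b ^ (N + 1) + (1 / (4 * δ)) * ((∫ z, z ∂(G k)) - b)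
            + δ * ((N:ℝ) + 1) ^ 2 * ∫ z, z ^ (2 * N + 1) ∂(G k) := by
          have I1 : Integrable (fun z : ℝ => 1 / (4 * δ) * (z - b)) (G k) :=
            (hk1.sub (integrable_const b)).const_mul _
          have I2 : Integrable (fun z : ℝ => δ * ((N:ℝ) + 1) ^ 2 * z ^ (2 * N + 1)) (G k) :=
            hk2n.const_mul _
          have I0 : Integrable (fun z : ℝ => b ^ (N + 1) + 1 / (4 * δ) * (z - b)) (G k) :=
            (integrable_const _).add I1
          rw [integral_add I0 I2, integral_add (integrable_const _) I1,
            integral_const_mul, integral_const_mul,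
            integral_sub hk1 (integrable_const b)]
          simp
    have hRHS : Tendsto (fun k => b ^ (N + 1) + (1 / (4 * δ)) * ((∫ z, z ∂(G k)) - b)
        + δ * ((N:ℝ) + 1) ^ 2 * ∫ z, z ^ (2 * N + 1) ∂(G k)) atTop
        (𝓝 (b ^ (N + 1) + (1 / (4 * δ)) * (b - b)
          + δ * ((N:ℝ) + 1) ^ 2 * (2 * (N:ℝ) + 1) ^ (2 * N + 1))) :=
      (tendsto_const_nhds.add (((h1.sub tendsto_const_nhds).const_mul _))).add
        (h2n.const_mul _)
    have := le_of_tendsto_of_tendsto hnn hRHS hineq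
    simp only [sub_self, mul_zero, add_zero] at this
    linarith [this]
  -- conclude
  set C : ℝ := ((N:ℝ) + 1) ^ 2 * (2 * (N:ℝ) + 1) ^ (2 * N + 1) with hC
  have hCpos : 0 < C := by positivity
  have hfin : ((N:ℝ) + 1) ^ (N + 1) ≤ b ^ (N + 1) := by
    apply le_of_forall_pos_le_add
    intro ε hε
    have := key (ε / C) (div_pos hε hCpos)
    rwa [div_mul_cancel₀ _ (ne_of_gt hCpos)] at this
  have : b ^ (N + 1) < ((N:ℝ) + 1) ^ (N + 1) :=
    pow_lt_pow_left₀ hbN (le_of_lt hb0) (Nat.succ_ne_zero N)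
  linarith
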